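/- In the equality s(x,y) - s(0,y) - s(0,x⁻) = sup_{z∈[x,y]} (s(z,z) - s(0,z) - s(0,z⁻)) holds, where s(x,y) = sup_{z∈[x,y]}(f₂(z) - f₁(z⁻)) for cadlag functions f₁, f₂ with nonnegative jumps on [0,∞) and 0 ≤ x ≤ y. -/

import Mathlib

open Filter Set

/-- Left limit with the convention `f(0⁻) = 0`. -/
noncomputable def lml (f : ℝ → ℝ) (z : ℝ) : ℝ := if z ≤ 0 then 0 else Function.leftLim f z

/-- Cadlag on `[0, ∞)`: right-continuous at every `x ≥ 0`, left limits exist at every `x > 0`. -/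
def Cadlag (f : ℝ → ℝ) : Prop :=
  (∀ x : ℝ, 0 ≤ x → ContinuousWithinAt f (Set.Ici x) x) ∧
  (∀ x : ℝ, 0 < x → ∃ l : ℝ, Filter.Tendsto f (nhdsWithin x (Set.Iio x)) (nhds l))

/-- All jumps are nonnegative (with the convention `f(0⁻) = 0`). -/
def NonnegJumps (f : ℝ → ℝ) : Prop := ∀ z : ℝ, 0 ≤ z → lml f z ≤ f z

/-- `S f₁ f₂ x y = sup_{z ∈ [x,y]} (f₂ z - f₁ (z⁻))`. -/
noncomputable def S (f₁ f₂ : ℝ → ℝ) (x y : ℝ) : ℝ :=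
  sSup ((fun z => f₂ z - lml f₁ z) '' Set.Icc x y)

/-- `Sm f₁ f₂ x y = sup_{z ∈ [x,y)} (f₂ z - f₁ (z⁻))`. -/
noncomputable def Sm (f₁ f₂ : ℝ → ℝ) (x y : ℝ) : ℝ :=
  sSup ((fun z => f₂ z - lml f₁ z) '' Set.Ico x y)

lemma lml_pos {f : ℝ → ℝ} {z : ℝ} (hz : 0 < z) : lml f z = Function.leftLim f z :=
  if_neg (not_le.mpr hz)

lemma lml_zero (f : ℝ → ℝ) : lml f 0 = 0 := if_pos le_rfl

lemma key_right (f : ℝ → ℝ) (hcad : Cadlag f) {z : ℝ} (hz : 0 ≤ z) {ε : ℝ} (hε : 0 < ε) :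
    ∃ δ > 0, ∀ w, z < w → w < z + δ →
      |f w - f z| ≤ ε ∧ |Function.leftLim f w - f z| ≤ ε := by
  have hc := hcad.1 z hz
  rw [Metric.continuousWithinAt_iff] at hc
  obtain ⟨δ, hδ, H⟩ := hc ε hε
  refine ⟨δ, hδ, fun w hw1 hw2 => ?_⟩
  have hfw : ∀ u, z ≤ u → u < z + δ → |f u - f z| ≤ ε := by
    intro u hu1 hu2
    have := H (mem_Ici.2 hu1) (by rw [Real.dist_eq]; rw [abs_lt]; constructor <;> linarith)
    rw [Real.dist_eq] at this; linarith [this]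
  refine ⟨hfw w hw1.le hw2, ?_⟩
  have hw0 : 0 < w := lt_of_le_of_lt hz hw1
  obtain ⟨l, hl⟩ := hcad.2 w hw0
  have hll : Function.leftLim f w = l :=
    leftLim_eq_of_tendsto hl
  rw [hll]
  have hev : ∀ᶠ u in nhdsWithin w (Set.Iio w), f u ∈ Icc (f z - ε) (f z + ε) := by
    filter_upwards [Ioo_mem_nhdsLT_of_mem (show w ∈ Set.Ioc z w from ⟨hw1, le_rfl⟩)]
      with u hu
    have := hfw u hu.1.le (lt_trans hu.2 hw2)
    rw [abs_le] at this; constructor <;> linarith [this.1, this.2]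
  have := isClosed_Icc.mem_of_tendsto hl hev
  rw [mem_Icc] at this
  rw [abs_le]; constructor <;> linarith [this.1, this.2]

lemma key_left (f : ℝ → ℝ) (hcad : Cadlag f) {z : ℝ} (hz : 0 < z) {ε : ℝ} (hε : 0 < ε) :
    ∃ c, 0 ≤ c ∧ c < z ∧ ∀ w, c < w → w < z →
      |f w - Function.leftLim f z| ≤ ε ∧
      |Function.leftLim f w - Function.leftLim f z| ≤ ε := by
  obtain ⟨l, hl⟩ := hcad.2 z hz
  have hll : Function.leftLim f z = l :=
    leftLim_eq_of_tendsto hl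
  rw [hll]
  have hev : ∀ᶠ u in nhdsWithin z (Set.Iio z), dist (f u) l < ε :=
    hl (Metric.ball_mem_nhds l hε)
  obtain ⟨a, ha, hsub⟩ := mem_nhdsLT_iff_exists_Ioo_subset.1 hev
  have haz : a < z := ha
  refine ⟨max a 0, le_max_right _ _, max_lt haz hz, fun w hw1 hw2 => ?_⟩
  have hfu : ∀ u, a < u → u < z → |f u - l| ≤ ε := by
    intro u h1 h2
    have := hsub (show u ∈ Set.Ioo a z from ⟨h1, h2⟩)
    rw [mem_setOf_eq, Real.dist_eq] at this; linarith [this]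
  have hwa : a < w := lt_of_le_of_lt (le_max_left a 0) hw1
  refine ⟨hfu w hwa hw2, ?_⟩
  have hw0 : 0 < w := lt_of_le_of_lt (le_max_right a 0) hw1
  obtain ⟨lw, hlw⟩ := hcad.2 w hw0
  have hllw : Function.leftLim f w = lw :=
    leftLim_eq_of_tendsto hlw
  rw [hllw]
  have hev2 : ∀ᶠ u in nhdsWithin w (Set.Iio w), f u ∈ Icc (l - ε) (l + ε) := by
    filter_upwards [Ioo_mem_nhdsLT_of_mem (show w ∈ Set.Ioc a w from ⟨hwa, le_rfl⟩)]
      with u hu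
    have := hfu u hu.1 (lt_trans hu.2 hw2)
    rw [abs_le] at this; constructor <;> linarith [this.1, this.2]
  have := isClosed_Icc.mem_of_tendsto hlw hev2
  rw [mem_Icc] at this
  rw [abs_le]; constructor <;> linarith [this.1, this.2]

lemma gA (f₁ f₂ : ℝ → ℝ) (h₁ : Cadlag f₁) (h₂ : Cadlag f₂) (hj₁ : NonnegJumps f₁)
    {z : ℝ} (hz : 0 ≤ z) {ε : ℝ} (hε : 0 < ε) :
    ∃ δ > 0, ∀ w, z < w → w < z + δ →
      f₂ w - lml f₁ w < (f₂ z - lml f₁ z) + ε := by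
  obtain ⟨δ₁, hδ₁, H₁⟩ := key_right f₁ h₁ hz (by positivity : (0:ℝ) < ε/4)
  obtain ⟨δ₂, hδ₂, H₂⟩ := key_right f₂ h₂ hz (by positivity : (0:ℝ) < ε/4)
  refine ⟨min δ₁ δ₂, lt_min hδ₁ hδ₂, fun w hw1 hw2 => ?_⟩
  have hw0 : 0 < w := lt_of_le_of_lt hz hw1
  rw [lml_pos hw0]
  have e₁ := (H₁ w hw1 (lt_of_lt_of_le hw2 (by simp [min_le_left]))).2 
  have e₂ := (H₂ w hw1 (lt_of_lt_of_le hw2 (by simp [min_le_right]))).1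
  have hj := hj₁ z hz
  rw [abs_le] at e₁ e₂
  linarith [e₁.1, e₁.2, e₂.1, e₂.2]

lemma gB (f₁ f₂ : ℝ → ℝ) (h₁ : Cadlag f₁) (h₂ : Cadlag f₂) (hj₂ : NonnegJumps f₂)
    {z : ℝ} (hz : 0 < z) {ε : ℝ} (hε : 0 < ε) :
    ∃ c, 0 ≤ c ∧ c < z ∧ ∀ w, c < w → w < z →
      f₂ w - lml f₁ w < (f₂ z - lml f₁ z) + ε := by
  obtain ⟨c₁, hc₁0, hc₁z, H₁⟩ := key_left f₁ h₁ hz (by positivity : (0:ℝ) < ε/4)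
  obtain ⟨c₂, hc₂0, hc₂z, H₂⟩ := key_left f₂ h₂ hz (by positivity : (0:ℝ) < ε/4)
  refine ⟨max c₁ c₂, le_max_of_le_left hc₁0, max_lt hc₁z hc₂z, fun w hw1 hw2 => ?_⟩
  have hw0 : 0 < w := lt_of_le_of_lt (le_max_of_le_left hc₁0) hw1
  rw [lml_pos hw0, lml_pos hz]
  have e₁ := (H₁ w (lt_of_le_of_lt (le_max_left _ _) hw1) hw2).2
  have e₂ := (H₂ w (lt_of_le_of_lt (le_max_right _ _) hw1) hw2).1
  have hj := hj₂ z hz.le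
  rw [lml_pos hz] at hj
  rw [abs_le] at e₁ e₂
  linarith [e₁.1, e₁.2, e₂.1, e₂.2]

lemma bddAbove_g (f₁ f₂ : ℝ → ℝ) (h₁ : Cadlag f₁) (h₂ : Cadlag f₂)
    (hj₁ : NonnegJumps f₁) (hj₂ : NonnegJumps f₂) {y : ℝ} (hy : 0 ≤ y) :
    BddAbove ((fun z => f₂ z - lml f₁ z) '' Set.Icc 0 y) := by
  set g : ℝ → ℝ := fun z => f₂ z - lml f₁ z with hg
  have hnb : ∀ z ∈ Set.Icc (0:ℝ) y, ∃ u : Set ℝ, u ∈ nhds z ∧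
      ∀ w ∈ u ∩ Set.Icc (0:ℝ) y, g w ≤ g z + 1 := by
    intro z hz
    obtain ⟨δ, hδ, HA⟩ := gA f₁ f₂ h₁ h₂ hj₁ hz.1 one_pos
    rcases eq_or_lt_of_le hz.1 with h0 | h0
    · refine ⟨Set.Ioo (-1) (z + δ), Ioo_mem_nhds (by linarith) (by linarith), ?_⟩
      rintro w ⟨⟨_, hw2⟩, hw3, _⟩
      rcases eq_or_lt_of_le (h0 ▸ hw3 : z ≤ w) with h | h
      · simp [← h]
      · exact (HA w h hw2).le
    · obtain ⟨c, hc0, hcz, HB⟩ := gB f₁ f₂ h₁ h₂ hj₂ h0 one_pos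
      refine ⟨Set.Ioo c (z + δ), Ioo_mem_nhds hcz (by linarith), ?_⟩
      rintro w ⟨⟨hw1, hw2⟩, _, _⟩
      rcases lt_trichotomy w z with h | h | h
      · exact (HB w hw1 h).le
      · simp [h]
      · exact (HA w h hw2).le
  choose U hU1 hU2 using hnb
  obtain ⟨t, ht⟩ := isCompact_Icc.elim_nhds_subcover' U hU1
  have h0mem : (0:ℝ) ∈ Set.Icc (0:ℝ) y := ⟨le_rfl, hy⟩
  have htne : t.Nonempty := by
    rcases Set.mem_iUnion₂.1 (ht h0mem) with ⟨p, hp, _⟩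
    exact ⟨p, hp⟩
  refine ⟨t.sup' htne (fun p => g p.1 + 1), ?_⟩
  rintro v ⟨w, hw, rfl⟩
  rcases Set.mem_iUnion₂.1 (ht hw) with ⟨p, hp, hwp⟩
  exact le_trans (hU2 p.1 p.2 w ⟨hwp, hw⟩) (Finset.le_sup' (fun p => g p.1 + 1) hp)

theorem stmt8 (f₁ f₂ : ℝ → ℝ) (h₁ : Cadlag f₁) (h₂ : Cadlag f₂)
    (hj₁ : NonnegJumps f₁) (hj₂ : NonnegJumps f₂)
    (x y : ℝ) (hx : 0 ≤ x) (hxy : x ≤ y) :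
    S f₁ f₂ x y - S f₁ f₂ 0 y - Sm f₁ f₂ 0 x
      = sSup ((fun z => S f₁ f₂ z z - S f₁ f₂ 0 z - Sm f₁ f₂ 0 z) '' Set.Icc x y) := by
  have hy0 : 0 ≤ y := hx.trans hxy
  set g : ℝ → ℝ := fun z => f₂ z - lml f₁ z with hgdef
  have eS : ∀ a b : ℝ, S f₁ f₂ a b = sSup (g '' Set.Icc a b) := fun a b => rfl
  have eSm : ∀ a b : ℝ, Sm f₁ f₂ a b = sSup (g '' Set.Ico a b) := fun a b => rfl
  have hbdd : BddAbove (g '' Set.Icc 0 y) := bddAbove_g f₁ f₂ h₁ h₂ hj₁ hj₂ hy0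
  have hbdd' : ∀ s : Set ℝ, s ⊆ Set.Icc 0 y → BddAbove (g '' s) :=
    fun s hs => hbdd.mono (Set.image_mono hs)
  have hneI : ∀ a b : ℝ, a ≤ b → (g '' Set.Icc a b).Nonempty :=
    fun a b h => ⟨g a, a, ⟨le_rfl, h⟩, rfl⟩
  have hneIo : ∀ a b : ℝ, a < b → (g '' Set.Ico a b).Nonempty :=
    fun a b h => ⟨g a, a, ⟨le_rfl, h⟩, rfl⟩
  have hg0 : 0 ≤ g 0 := by
    have := hj₂ 0 le_rfl
    rw [lml_zero] at this
    simp only [hgdef, lml_zero]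
    linarith
  set A := Sm f₁ f₂ 0 x with hAdef
  have hSm00 : Sm f₁ f₂ 0 0 = 0 := by
    rw [eSm, Set.Ico_self, Set.image_empty, Real.sSup_empty]
  have hA_le : ∀ w, 0 ≤ w → w < x → g w ≤ A := by
    intro w h1 h2
    rw [hAdef, eSm]
    exact le_csSup (hbdd' _ (fun u hu => ⟨hu.1, hu.2.le.trans hxy⟩)) ⟨w, ⟨h1, h2⟩, rfl⟩
  have hSxy_ge : ∀ z, x ≤ z → z ≤ y → g z ≤ S f₁ f₂ x y := by
    intro z h1 h2
    rw [eS]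
    exact le_csSup (hbdd' _ (fun u hu => ⟨hx.trans hu.1, hu.2⟩)) ⟨z, ⟨h1, h2⟩, rfl⟩
  have hS0z_ge_g : ∀ z, 0 ≤ z → z ≤ y → g z ≤ S f₁ f₂ 0 z := by
    intro z h1 h2
    rw [eS]
    exact le_csSup (hbdd' _ (fun u hu => ⟨hu.1, hu.2.trans h2⟩)) ⟨z, ⟨h1, le_rfl⟩, rfl⟩
  have hS0z_ge_A : ∀ z, x ≤ z → z ≤ y → A ≤ S f₁ f₂ 0 z := by
    intro z h1 h2
    have hz0 : (0:ℝ) ≤ z := hx.trans h1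
    rcases eq_or_lt_of_le hx with h0 | h0
    · rw [hAdef, ← h0, hSm00]
      have : g 0 ≤ S f₁ f₂ 0 z := by
        rw [eS]
        exact le_csSup (hbdd' _ (fun u hu => ⟨hu.1, hu.2.trans h2⟩)) ⟨0, ⟨le_rfl, hz0⟩, rfl⟩
      exact hg0.trans this
    · rw [hAdef, eSm, eS]
      exact csSup_le_csSup (hbdd' _ (fun u hu => ⟨hu.1, hu.2.trans h2⟩))
        (hneIo 0 x h0)
        (Set.image_mono (f := g) (fun u hu => ⟨hu.1, hu.2.le.trans h1⟩))
  have hSm0z_ge_A : ∀ z, x ≤ z → z ≤ y → A ≤ Sm f₁ f₂ 0 z := by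
    intro z h1 h2
    rcases eq_or_lt_of_le hx with h0 | h0
    · rw [hAdef, ← h0, hSm00]
      have hz0 : 0 ≤ z := h0 ▸ h1
      rcases eq_or_lt_of_le hz0 with hz | hz
      · rw [← hz, hSm00]
      · rw [eSm]
        refine hg0.trans (le_csSup (hbdd' _ (fun u hu => ⟨hu.1, hu.2.le.trans h2⟩)) ?_)
        exact ⟨0, ⟨le_rfl, hz⟩, rfl⟩
    · rw [hAdef, eSm, eSm]
      exact csSup_le_csSup (hbdd' _ (fun u hu => ⟨hu.1, hu.2.le.trans h2⟩))
        (hneIo 0 x h0)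
        (Set.image_mono (f := g) (fun u hu => ⟨hu.1, hu.2.trans_le h1⟩))
  have hS0y : S f₁ f₂ 0 y = max A (S f₁ f₂ x y) := by
    apply le_antisymm
    · rw [eS]
      apply csSup_le (hneI 0 y hy0)
      rintro b ⟨w, ⟨hw0, hwy⟩, rfl⟩
      rcases lt_or_ge w x with h | h
      · exact le_max_of_le_left (hA_le w hw0 h)
      · exact le_max_of_le_right (hSxy_ge w h hwy)
    · refine max_le (hS0z_ge_A y hxy le_rfl) ?_
      rw [eS, eS]
      exact csSup_le_csSup (hbdd' _ (fun u hu => hu))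
        (hneI x y hxy)
        (Set.image_mono (f := g) (fun u hu => ⟨hx.trans hu.1, hu.2⟩))
  have hSzz : ∀ z : ℝ, S f₁ f₂ z z = g z := by
    intro z
    rw [eS, Set.Icc_self, Set.image_singleton, csSup_singleton]
  set key := min (S f₁ f₂ x y) A - A - A with hkeydef
  have hLHS : S f₁ f₂ x y - S f₁ f₂ 0 y - A = key := by
    rw [hS0y, hkeydef]
    rcases le_total (S f₁ f₂ x y) A with h | h
    · rw [max_eq_left h, min_eq_left h]
    · rw [max_eq_right h, min_eq_right h]; ring
  set Φ : ℝ → ℝ := fun z => S f₁ f₂ z z - S f₁ f₂ 0 z - Sm f₁ f₂ 0 z with hΦdef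
  have hΦle : ∀ z, x ≤ z → z ≤ y → Φ z ≤ key := by
    intro z h1 h2
    have e1 : g z ≤ S f₁ f₂ 0 z := hS0z_ge_g z (hx.trans h1) h2
    have e2 : A ≤ S f₁ f₂ 0 z := hS0z_ge_A z h1 h2
    have e3 : A ≤ Sm f₁ f₂ 0 z := hSm0z_ge_A z h1 h2
    have e4 : g z ≤ S f₁ f₂ x y := hSxy_ge z h1 h2
    rw [hΦdef]
    simp only [hSzz]
    rcases le_total (g z) A with h | h
    · have := le_min e4 h
      rw [hkeydef]; linarith
    · have := min_eq_right (h.trans e4)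
      rw [hkeydef, this]; linarith
  have hbddΦ : BddAbove (Φ '' Set.Icc x y) :=
    ⟨key, by rintro b ⟨z, hz, rfl⟩; exact hΦle z hz.1 hz.2⟩
  have hRHSle : sSup (Φ '' Set.Icc x y) ≤ key := by
    apply csSup_le (⟨Φ x, x, ⟨le_rfl, hxy⟩, rfl⟩ : (Φ '' Set.Icc x y).Nonempty)
    rintro b ⟨z, hz, rfl⟩
    exact hΦle z hz.1 hz.2
  have hRHSge : key ≤ sSup (Φ '' Set.Icc x y) := by
    rcases le_or_gt (S f₁ f₂ x y) A with hcase | hcase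
    · -- Case 1 : the running sup never exceeds A on [x,y]
      have hgA : ∀ w, x ≤ w → w ≤ y → g w ≤ A := fun w e1 e2 => (hSxy_ge w e1 e2).trans hcase
      have hS0 : ∀ z, x ≤ z → z ≤ y → S f₁ f₂ 0 z = A := by
        intro z h1 h2
        refine le_antisymm ?_ (hS0z_ge_A z h1 h2)
        rw [eS]
        apply csSup_le (hneI 0 z (hx.trans h1))
        rintro b ⟨w, ⟨hw0, hwz⟩, rfl⟩
        rcases lt_or_ge w x with h | h
        · exact hA_le w hw0 h
        · exact hgA w h (hwz.trans h2)
      have hSm0 : ∀ z, x ≤ z → z ≤ y → Sm f₁ f₂ 0 z = A := by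
        intro z h1 h2
        rcases eq_or_lt_of_le (hx.trans h1 : (0:ℝ) ≤ z) with h0 | h0
        · have hx0 : x = 0 := le_antisymm (h1.trans h0.symm.le) hx
          rw [← h0, hSm00, hAdef, hx0, hSm00]
        · refine le_antisymm ?_ (hSm0z_ge_A z h1 h2)
          rw [eSm]
          apply csSup_le (hneIo 0 z h0)
          rintro b ⟨w, ⟨hw0, hwz⟩, rfl⟩
          rcases lt_or_ge w x with h | h
          · exact hA_le w hw0 h
          · exact hgA w h (hwz.le.trans h2)
      have himg : Φ '' Set.Icc x y = (fun u => u - (A + A)) '' (g '' Set.Icc x y) := by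
        rw [← Set.image_comp]
        apply Set.image_congr
        intro z hz
        simp only [Function.comp, hΦdef, hSzz, hS0 z hz.1 hz.2, hSm0 z hz.1 hz.2]
        ring
      rw [himg]
      have hmap := Monotone.map_csSup_of_continuousAt
        (f := fun u : ℝ => u - (A + A))
        ((continuous_id.sub continuous_const).continuousAt)
        (fun a b h => by simpa using sub_le_sub_right h (A + A))
        (hneI x y hxy)
        (hbdd' _ (fun u hu => ⟨hx.trans hu.1, hu.2⟩))
      rw [← hmap]
      have hmin : min (S f₁ f₂ x y) A = S f₁ f₂ x y := min_eq_left hcase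
      rw [hkeydef, hmin, eS]
      ring_nf
      exact le_rfl
    · -- Case 2 : the running sup exceeds A somewhere
      have hTne : {z : ℝ | z ∈ Set.Icc x y ∧ A < g z}.Nonempty := by
        rw [eS] at hcase
        obtain ⟨b, hb, hAb⟩ := exists_lt_of_lt_csSup (hneI x y hxy) hcase
        obtain ⟨z, hz, rfl⟩ := hb
        exact ⟨z, hz, hAb⟩
      set T := {z : ℝ | z ∈ Set.Icc x y ∧ A < g z} with hTdef
      have hTbdd : BddBelow T := ⟨x, fun t ht => ht.1.1⟩
      set z₀ := sInf T with hz₀def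
      have hz₀x : x ≤ z₀ := le_csInf hTne (fun t ht => ht.1.1)
      have hz₀y : z₀ ≤ y := by
        obtain ⟨t, ht⟩ := hTne
        exact (csInf_le hTbdd ht).trans ht.1.2
      have hz₀0 : 0 ≤ z₀ := hx.trans hz₀x
      have hbelow : ∀ w, x ≤ w → w < z₀ → g w ≤ A := by
        intro w e1 e2
        by_contra h
        push_neg at h
        exact absurd (csInf_le hTbdd ⟨⟨e1, e2.le.trans hz₀y⟩, h⟩) (not_le.mpr e2)
      have hgz₀ : A ≤ g z₀ := by
        by_contra h
        push_neg at h
        by_cases hmem : z₀ ∈ T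
        · exact absurd hmem.2 (not_lt.mpr h.le)
        · obtain ⟨δ, hδ, HA⟩ := gA f₁ f₂ h₁ h₂ hj₁ hz₀0 (show (0:ℝ) < A - g z₀ by linarith)
          obtain ⟨t, ht, htlt⟩ := exists_lt_of_csInf_lt hTne
            (show sInf T < z₀ + δ by rw [← hz₀def]; linarith)
          rcases eq_or_lt_of_le (csInf_le hTbdd ht) with e | e
          · exact hmem (by rw [hz₀def, e]; exact ht)
          · have := HA t e htlt
            have h2 := ht.2
            simp only [hgdef] at this h2 ⊢
            linarith
      have hSm0z₀ : Sm f₁ f₂ 0 z₀ = A := by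
        rcases eq_or_lt_of_le hz₀0 with h0 | h0
        · have hx0 : x = 0 := le_antisymm (hz₀x.trans h0.symm.le) hx
          rw [← h0, hSm00, hAdef, hx0, hSm00]
        · refine le_antisymm ?_ (hSm0z_ge_A z₀ hz₀x hz₀y)
          rw [eSm]
          apply csSup_le (hneIo 0 z₀ h0)
          rintro b ⟨w, ⟨hw0, hwz⟩, rfl⟩
          rcases lt_or_ge w x with h | h
          · exact hA_le w hw0 h
          · exact hbelow w h hwz
      have hS0z₀ : S f₁ f₂ 0 z₀ = g z₀ := by
        refine le_antisymm ?_ (hS0z_ge_g z₀ hz₀0 hz₀y)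
        rw [eS]
        apply csSup_le (hneI 0 z₀ hz₀0)
        rintro b ⟨w, ⟨hw0, hwz⟩, rfl⟩
        rcases eq_or_lt_of_le hwz with e | e
        · exact le_of_eq (by rw [e])
        · rcases lt_or_ge w x with h | h
          · exact (hA_le w hw0 h).trans hgz₀
          · exact (hbelow w h e).trans hgz₀
      have hval : Φ z₀ = -A := by
        rw [hΦdef]
        simp only [hSzz, hS0z₀, hSm0z₀]
        ring
      have hmem : Φ z₀ ∈ Φ '' Set.Icc x y := ⟨z₀, ⟨hz₀x, hz₀y⟩, rfl⟩
      have := le_csSup hbddΦ hmem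
      rw [hval] at this
      rw [hkeydef, min_eq_right hcase.le]
      linarith
  rw [hLHS]
  exact le_antisymm hRHSge hRHSle
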